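/- For a pairwise Markov random field on a tree T with strictly positive edge potentials, every consistent belief system satisfies F_B ≥ -ln Z, where Z = Σ_x ∏_{{i,j}∈E(T)} ψ_{ij}(x_i, x_j), and equality holds if and only if the beliefs are the exact marginals of p = p̃/Z (b_i = p_i for all i and b_{ij} = p_{ij} for all edges). In particular, the minimum of the Bethe free energy over all consistent belief systems equals -ln Z. -/

import Mathlib

open Finset

variable {V : Type*} [Fintype V] [DecidableEq V]
  {X : V → Type*} [∀ i, Fintype (X i)] [∀ i, DecidableEq (X i)]

/-- The single-variable marginal `p_i(s) = Σ_{x : x_i = s} p(x)`. -/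
noncomputable def marg1 (p : ((i : V) → X i) → ℝ) (i : V) (s : X i) : ℝ :=
  ∑ x ∈ Finset.univ.filter (fun x : (i : V) → X i => x i = s), p x

/-- The pairwise marginal `p_{ij}(s,t) = Σ_{x : x_i = s, x_j = t} p(x)`. -/
noncomputable def marg2 (p : ((i : V) → X i) → ℝ) (i j : V) (s : X i) (t : X j) : ℝ :=
  ∑ x ∈ Finset.univ.filter (fun x : (i : V) → X i => x i = s ∧ x j = t), p x

/-- The per-edge Bethe term `Σ_{s,t} b_{ij}(s,t) · ln (b_{ij}(s,t) / ψ_{ij}(s,t))`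
is a symmetric function of the (ordered) edge, hence descends to `Sym2 V`. -/
theorem betheEdgeTerm_symm {V : Type*} {X : V → Type*} [∀ i, Fintype (X i)]
    (b2 ψ2 : (i j : V) → X i → X j → ℝ)
    (hbsym : ∀ i j s t, b2 i j s t = b2 j i t s)
    (hψsym : ∀ i j s t, ψ2 i j s t = ψ2 j i t s) (i j : V) :
    (∑ s : X i, ∑ t : X j, b2 i j s t * Real.log (b2 i j s t / ψ2 i j s t))
      = ∑ t : X j, ∑ s : X i, b2 j i t s * Real.log (b2 j i t s / ψ2 j i t s) := by
  rw [Finset.sum_comm]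
  exact Finset.sum_congr rfl fun t _ => Finset.sum_congr rfl fun s _ => by
    rw [hbsym, hψsym]

/-- The Bethe free energy of a belief system `(b1, b2)` relative to edge
potentials `ψ2` on the tree `T`:
`F_B = Σ_{{i,j}∈E(T)} Σ_{s,t} b_{ij}(s,t) ln (b_{ij}(s,t)/ψ_{ij}(s,t))
       - Σ_i (deg(i) - 1) Σ_s b_i(s) ln b_i(s)`. -/
noncomputable def betheFreeEnergy (T : SimpleGraph V) [DecidableRel T.Adj]
    (b1 : (i : V) → X i → ℝ) (b2 ψ2 : (i j : V) → X i → X j → ℝ)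
    (hbsym : ∀ i j s t, b2 i j s t = b2 j i t s)
    (hψsym : ∀ i j s t, ψ2 i j s t = ψ2 j i t s) : ℝ :=
  (∑ e ∈ T.edgeFinset,
      Sym2.lift ⟨fun i j => ∑ s : X i, ∑ t : X j,
          b2 i j s t * Real.log (b2 i j s t / ψ2 i j s t),
        betheEdgeTerm_symm b2 ψ2 hbsym hψsym⟩ e)
    - ∑ i : V, ((T.degree i : ℝ) - 1) * ∑ s : X i, b1 i s * Real.log (b1 i s)


section BetheAux
open SimpleGraph

section Gibbs
variable {A : Type*} [Fintype A]

/-- Gibbs' inequality, nonnegativity of KL divergence. -/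
lemma gibbs_nonneg (f g : A → ℝ) (hf : ∀ x, 0 < f x) (hg : ∀ x, 0 < g x)
    (hfs : ∑ x, f x = 1) (hgs : ∑ x, g x = 1) :
    0 ≤ ∑ x, f x * (Real.log (f x) - Real.log (g x)) := by
  have key : ∀ x, f x * (Real.log (g x) - Real.log (f x)) ≤ g x - f x := by
    intro x
    have h1 : Real.log (g x) - Real.log (f x) = Real.log (g x / f x) := by
      rw [Real.log_div (hg x).ne' (hf x).ne']
    rw [h1]
    have h2 := Real.log_le_sub_one_of_pos (div_pos (hg x) (hf x))
    calc f x * Real.log (g x / f x) ≤ f x * (g x / f x - 1) :=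
          mul_le_mul_of_nonneg_left h2 (hf x).le
      _ = g x - f x := by rw [mul_sub, mul_one, mul_div_cancel₀ _ (hf x).ne']
  have hsum : ∑ x, f x * (Real.log (g x) - Real.log (f x)) ≤ 0 := by
    calc ∑ x, f x * (Real.log (g x) - Real.log (f x)) ≤ ∑ x, (g x - f x) :=
          Finset.sum_le_sum fun x _ => key x
      _ = 0 := by rw [Finset.sum_sub_distrib, hfs, hgs, sub_self]
  have : ∑ x, f x * (Real.log (f x) - Real.log (g x))
      = -∑ x, f x * (Real.log (g x) - Real.log (f x)) := by
    rw [← Finset.sum_neg_distrib]; congr 1; ext x; ring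
  rw [this]; linarith

lemma gibbs_eq_iff (f g : A → ℝ) (hf : ∀ x, 0 < f x) (hg : ∀ x, 0 < g x)
    (hfs : ∑ x, f x = 1) (hgs : ∑ x, g x = 1) :
    ∑ x, f x * (Real.log (f x) - Real.log (g x)) = 0 ↔ ∀ x, f x = g x := by
  constructor
  · intro h0 x
    by_contra hne
    -- each term g x - f x - f x * log(g/f) ≥ 0, sum is 0 - 0 = 0, strict at x
    have key : ∀ y, 0 ≤ g y - f y - f y * (Real.log (g y) - Real.log (f y)) := by
      intro y
      have h1 : Real.log (g y) - Real.log (f y) = Real.log (g y / f y) := by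
        rw [Real.log_div (hg y).ne' (hf y).ne']
      rw [h1]
      have h2 := Real.log_le_sub_one_of_pos (div_pos (hg y) (hf y))
      have := mul_le_mul_of_nonneg_left h2 (hf y).le
      have heq : f y * (g y / f y - 1) = g y - f y := by rw [mul_sub, mul_one, mul_div_cancel₀ _ (hf y).ne']
      nlinarith
    have hsum0 : ∑ y, (g y - f y - f y * (Real.log (g y) - Real.log (f y))) = 0 := by
      have : ∀ y, f y * (Real.log (g y) - Real.log (f y))
          = -(f y * (Real.log (f y) - Real.log (g y))) := fun y => by ring
      simp only [this]
      rw [Finset.sum_sub_distrib, Finset.sum_sub_distrib, hfs, hgs]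
      rw [Finset.sum_neg_distrib, h0]
      ring
    have hall := (Finset.sum_eq_zero_iff_of_nonneg (fun y _ => key y)).1 hsum0
    have hx := hall x (Finset.mem_univ x)
    have h1 : Real.log (g x) - Real.log (f x) = Real.log (g x / f x) := by
      rw [Real.log_div (hg x).ne' (hf x).ne']
    have hne1 : g x / f x ≠ 1 := by
      intro h; apply hne; rw [div_eq_one_iff_eq (hf x).ne'] at h; exact h.symm
    have h2 := Real.log_lt_sub_one_of_pos (div_pos (hg x) (hf x)) hne1
    rw [h1] at hx
    have := mul_lt_mul_of_pos_left h2 (hf x)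
    have heq : f x * (g x / f x - 1) = g x - f x := by rw [mul_sub, mul_one, mul_div_cancel₀ _ (hf x).ne']
    nlinarith
  · intro h; simp only [h]; simp
end Gibbs

section GraphAux
variable {V : Type*} [Fintype V] [DecidableEq V]

omit [DecidableEq V] in
lemma tree_exists_leaf (T : SimpleGraph V) [DecidableRel T.Adj] (hT : T.IsTree)
    (h2 : 2 ≤ Fintype.card V) : ∃ v, T.degree v = 1 := by
  by_contra hno
  push_neg at hno
  have hge : ∀ v, 2 ≤ T.degree v := by
    intro v
    obtain ⟨u, hu⟩ := Fintype.exists_ne_of_one_lt_card (by omega) v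
    have hr := (hT.isConnected.preconnected v u)
    obtain ⟨p⟩ := hr
    have hnn : ¬ p.Nil := SimpleGraph.Walk.not_nil_of_ne (Ne.symm hu)
    obtain ⟨c, hadj, q, rfl⟩ := SimpleGraph.Walk.not_nil_iff.1 hnn
    have hpos : 0 < T.degree v := (SimpleGraph.degree_pos_iff_exists_adj (G := T) v).2 ⟨c, hadj⟩
    have := hno v
    omega
  have hsum := T.sum_degrees_eq_twice_card_edges
  have hcard := hT.card_edgeFinset
  have : 2 * Fintype.card V ≤ ∑ v, T.degree v := by
    calc 2 * Fintype.card V = ∑ _v : V, 2 := by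
          simp [Finset.sum_const, Finset.card_univ, mul_comm]
      _ ≤ ∑ v, T.degree v := Finset.sum_le_sum fun v _ => hge v
  omega

lemma leaf_path_avoid {T : SimpleGraph V} [DecidableRel T.Adj] {v u : V}
    (hnf : T.neighborFinset v = {u}) {a b : V} (ha : a ≠ v) (hb : b ≠ v)
    (p : T.Walk a b) (hp : p.IsPath) : v ∉ p.support := by
  intro hv
  have hspec := SimpleGraph.Walk.take_spec p hv
  set p₁ := p.takeUntil v hv with hp₁def
  set p₂ := p.dropUntil v hv with hp₂def
  have hnodup : (p₁.append p₂).support.Nodup := by rw [hspec]; exact hp.support_nodup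
  rw [SimpleGraph.Walk.support_append, List.nodup_append] at hnodup
  -- first neighbor from p₁ reversed
  have hnn1 : ¬ p₁.reverse.Nil := SimpleGraph.Walk.not_nil_of_ne (Ne.symm ha)
  obtain ⟨c₁, hadj1, q₁, hq₁⟩ := SimpleGraph.Walk.not_nil_iff.1 hnn1
  have hc₁u : c₁ = u := by
    have : c₁ ∈ T.neighborFinset v := by rw [SimpleGraph.mem_neighborFinset]; exact hadj1
    rwa [hnf, Finset.mem_singleton] at this
  have hc₁mem : c₁ ∈ p₁.support := by
    have : c₁ ∈ p₁.reverse.support := by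
      rw [hq₁, SimpleGraph.Walk.support_cons]
      exact List.mem_cons_of_mem _ q₁.start_mem_support
    rwa [SimpleGraph.Walk.support_reverse, List.mem_reverse] at this
  -- second neighbor from p₂
  have hnn2 : ¬ p₂.Nil := SimpleGraph.Walk.not_nil_of_ne hb.symm
  obtain ⟨c₂, hadj2, q₂, hq₂⟩ := SimpleGraph.Walk.not_nil_iff.1 hnn2
  have hc₂u : c₂ = u := by
    have : c₂ ∈ T.neighborFinset v := by rw [SimpleGraph.mem_neighborFinset]; exact hadj2
    rwa [hnf, Finset.mem_singleton] at this
  have hc₂mem : c₂ ∈ p₂.support.tail := by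
    rw [hq₂, SimpleGraph.Walk.support_cons, List.tail_cons]
    exact q₂.start_mem_support
  exact hnodup.2.2 c₁ hc₁mem c₂ hc₂mem (hc₁u.trans hc₂u.symm)

omit [Fintype V] [DecidableEq V] in
lemma comap_walk_reachable {T : SimpleGraph V} {v : V} :
    ∀ {a b : V} (p : T.Walk a b) (ha : a ≠ v) (hb : b ≠ v), v ∉ p.support →
      (T.comap (Subtype.val : {w : V // w ≠ v} → V)).Reachable ⟨a, ha⟩ ⟨b, hb⟩ := by
  intro a b p
  induction p with
  | nil => intro ha hb _; rfl
  | cons hadj q ih =>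
    rename_i x y z
    intro ha hb hv
    rw [SimpleGraph.Walk.support_cons] at hv
    have hy : y ≠ v := by
      intro h; exact hv (List.mem_cons_of_mem _ (h ▸ q.start_mem_support))
    have h1 : (T.comap (Subtype.val : {w : V // w ≠ v} → V)).Adj ⟨x, ha⟩ ⟨y, hy⟩ := hadj
    exact (h1.reachable).trans (ih hy hb fun h => hv (List.mem_cons_of_mem _ h))

lemma comap_isTree {T : SimpleGraph V} [DecidableRel T.Adj] (hT : T.IsTree) {v u : V}
    (hnf : T.neighborFinset v = {u}) :
    (T.comap (Subtype.val : {w : V // w ≠ v} → V)).IsTree := by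
  constructor
  · have hu : T.Adj v u := by
      rw [← SimpleGraph.mem_neighborFinset, hnf]; exact Finset.mem_singleton_self u
    have huv : u ≠ v := fun h => T.irrefl (h ▸ hu)
    haveI : Nonempty {w : V // w ≠ v} := ⟨⟨u, huv⟩⟩
    refine SimpleGraph.Connected.mk ?_
    rintro ⟨a, ha⟩ ⟨b, hb⟩
    obtain ⟨p⟩ := hT.isConnected.preconnected a b
    have hpath := p.toPath
    exact comap_walk_reachable hpath.val ha hb
      (leaf_path_avoid hnf ha hb hpath.val hpath.property)
  · intro w c hc
    have hinj : Function.Injective (Subtype.val : {w : V // w ≠ v} → V) :=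
      Subtype.val_injective
    exact hT.IsAcyclic (c.map (SimpleGraph.Hom.comap Subtype.val T)) (hc.map hinj)

section decomp
variable {T : SimpleGraph V} [DecidableRel T.Adj] {v u : V}

lemma comap_neighborFinset (w : {w : V // w ≠ v}) :
    (T.comap (Subtype.val : {w : V // w ≠ v} → V)).neighborFinset w
      = (T.neighborFinset w.val).subtype (· ≠ v) := by
  ext j
  simp [SimpleGraph.mem_neighborFinset, SimpleGraph.comap_adj]

lemma card_subtype_eq_filter {α : Type*} [DecidableEq α] (s : Finset α) (p : α → Prop)
    [DecidablePred p] : (s.subtype p).card = (s.filter p).card := by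
  rw [← Finset.subtype_map]; exact (Finset.card_map _).symm

lemma comap_degree_eq (hnf : T.neighborFinset v = {u}) (w : {w : V // w ≠ v})
    (hwu : w.val ≠ u) :
    (T.comap (Subtype.val : {w : V // w ≠ v} → V)).degree w = T.degree w.val := by
  rw [SimpleGraph.degree, comap_neighborFinset, card_subtype_eq_filter]
  rw [Finset.filter_true_of_mem]
  · rfl
  · intro j hj hjv
    rw [SimpleGraph.mem_neighborFinset] at hj
    subst hjv
    have : w.val ∈ T.neighborFinset j := by
      rw [SimpleGraph.mem_neighborFinset]; exact hj.symm
    rw [hnf, Finset.mem_singleton] at this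
    exact hwu this

lemma comap_degree_u (hnf : T.neighborFinset v = {u}) (hu' : u ≠ v) :
    (T.comap (Subtype.val : {w : V // w ≠ v} → V)).degree ⟨u, hu'⟩ + 1 = T.degree u := by
  have hvu : T.Adj v u := by
    rw [← SimpleGraph.mem_neighborFinset, hnf]; exact Finset.mem_singleton_self u
  have hmem : v ∈ T.neighborFinset u := by
    rw [SimpleGraph.mem_neighborFinset]; exact hvu.symm
  rw [SimpleGraph.degree, comap_neighborFinset, card_subtype_eq_filter, Finset.filter_ne',
    Finset.card_erase_of_mem hmem]
  have : 1 ≤ (T.neighborFinset u).card := Finset.card_pos.2 ⟨v, hmem⟩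
  rw [SimpleGraph.degree]
  omega

lemma edge_decomp (hnf : T.neighborFinset v = {u}) :
    T.edgeFinset.erase s(v, u)
      = (T.comap (Subtype.val : {w : V // w ≠ v} → V)).edgeFinset.image
          (Sym2.map Subtype.val) := by
  ext e
  simp only [Finset.mem_erase, SimpleGraph.mem_edgeFinset, Finset.mem_image]
  constructor
  · rintro ⟨hne, he⟩
    induction e with
    | _ a b =>
      rw [SimpleGraph.mem_edgeSet] at he
      have hav : a ≠ v := by
        intro h
        apply hne
        have : b ∈ T.neighborFinset v := by
          rw [SimpleGraph.mem_neighborFinset]; exact h ▸ he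
        rw [hnf, Finset.mem_singleton] at this
        rw [h, this]
      have hbv : b ≠ v := by
        intro h
        apply hne
        have : a ∈ T.neighborFinset v := by
          rw [SimpleGraph.mem_neighborFinset]; exact (h ▸ he).symm
        rw [hnf, Finset.mem_singleton] at this
        rw [h, this, Sym2.eq_swap]
      refine ⟨s(⟨a, hav⟩, ⟨b, hbv⟩), ?_, ?_⟩
      · rw [SimpleGraph.mem_edgeSet]; exact he
      · rw [Sym2.map_pair_eq]
  · rintro ⟨e', he', rfl⟩
    induction e' with
    | _ a' b' =>
      rw [SimpleGraph.mem_edgeSet] at he'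
      rw [Sym2.map_pair_eq]
      constructor
      · intro h
        rw [Sym2.eq_iff] at h
        rcases h with ⟨h1, _⟩ | ⟨_, h2⟩
        · exact a'.property h1
        · exact b'.property h2
      · rw [SimpleGraph.mem_edgeSet]; exact he'

lemma prod_edge_split (hnf : T.neighborFinset v = {u}) (F : Sym2 V → ℝ) :
    ∏ e ∈ T.edgeFinset, F e
      = F s(v, u) * ∏ e' ∈ (T.comap (Subtype.val : {w : V // w ≠ v} → V)).edgeFinset,
          F (Sym2.map Subtype.val e') := by
  have hvu : T.Adj v u := by
    rw [← SimpleGraph.mem_neighborFinset, hnf]; exact Finset.mem_singleton_self u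
  have hmem : s(v, u) ∈ T.edgeFinset := SimpleGraph.mem_edgeFinset.2 hvu
  rw [← Finset.mul_prod_erase _ _ hmem, edge_decomp hnf,
    Finset.prod_image (fun x _ y _ h => Sym2.map.injective Subtype.val_injective h)]

end decomp
end GraphAux

section CoreAux
variable {V : Type*} [Fintype V] [DecidableEq V]
  {X : V → Type*} [∀ i, Fintype (X i)] [∀ i, DecidableEq (X i)]



universe u u'


noncomputable def treeQ (T : SimpleGraph V) [DecidableRel T.Adj]
    (b1 : (i : V) → X i → ℝ) (b2 : (i j : V) → X i → X j → ℝ)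
    (hbsym : ∀ i j s t, b2 i j s t = b2 j i t s) (x : (i : V) → X i) : ℝ :=
  (∏ e ∈ T.edgeFinset,
      Sym2.lift ⟨fun i j => b2 i j (x i) (x j), fun i j => hbsym i j (x i) (x j)⟩ e)
    * ∏ i : V, (b1 i (x i)) ^ ((1 : ℤ) - (T.degree i : ℤ))


lemma sum_marg1 (q : ((i : V) → X i) → ℝ) (i : V) :
    ∑ s, marg1 q i s = ∑ x, q x := by
  simpa [marg1] using Finset.sum_fiberwise Finset.univ (fun x : (i : V) → X i => x i) q

lemma sum_mul_marg1 (q : ((i : V) → X i) → ℝ) (i : V) (h : X i → ℝ) :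
    ∑ x, q x * h (x i) = ∑ s, marg1 q i s * h s := by
  rw [← Finset.sum_fiberwise Finset.univ (fun x : (i : V) → X i => x i)
    (fun x => q x * h (x i))]
  refine Finset.sum_congr rfl fun s _ => ?_
  rw [marg1, Finset.sum_mul]
  refine Finset.sum_congr rfl fun x hx => ?_
  simp only [Finset.mem_filter] at hx
  rw [hx.2]

lemma sum_mul_marg2 (q : ((i : V) → X i) → ℝ) (i j : V) (h : X i → X j → ℝ) :
    ∑ x, q x * h (x i) (x j) = ∑ s, ∑ t, marg2 q i j s t * h s t := by
  have hrhs : (∑ s : X i, ∑ t : X j, marg2 q i j s t * h s t)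
      = ∑ p : X i × X j, marg2 q i j p.1 p.2 * h p.1 p.2 := by
    rw [Fintype.sum_prod_type]
  rw [hrhs]
  rw [← Finset.sum_fiberwise Finset.univ (fun x : (i : V) → X i => ((x i, x j) : X i × X j))
    (fun x => q x * h (x i) (x j))]
  refine Finset.sum_congr rfl fun p _ => ?_
  rw [marg2, Finset.sum_mul]
  refine Finset.sum_congr ?_ fun x hx => ?_
  · ext x; simp [Prod.ext_iff]
  · simp only [Finset.mem_filter] at hx
    rw [hx.2.1, hx.2.2]

lemma marg2_comm (q : ((i : V) → X i) → ℝ) (i j : V) (s : X i) (t : X j) :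
    marg2 q i j s t = marg2 q j i t s := by
  unfold marg2
  refine Finset.sum_congr ?_ fun _ _ => rfl
  ext x; simp [and_comm]


lemma treeQ_marg : ∀ (n : ℕ) (V : Type u) (_ : Fintype V) (_ : DecidableEq V)
    (X : V → Type u') (_ : ∀ i, Fintype (X i)) (_ : ∀ i, DecidableEq (X i))
    (T : SimpleGraph V) (_ : DecidableRel T.Adj), Fintype.card V = n → T.IsTree →
    ∀ (b1 : (i : V) → X i → ℝ) (b2 : (i j : V) → X i → X j → ℝ)
      (hbsym : ∀ i j s t, b2 i j s t = b2 j i t s),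
      (∀ i s, 0 < b1 i s) → (∀ i, ∑ s, b1 i s = 1) →
      (∀ i j, T.Adj i j → ∀ s : X i, ∑ t, b2 i j s t = b1 i s) →
      (∀ i s, marg1 (treeQ T b1 b2 hbsym) i s = b1 i s) ∧
        (∀ i j, T.Adj i j → ∀ s t, marg2 (treeQ T b1 b2 hbsym) i j s t = b2 i j s t) := by
  intro n
  induction n using Nat.strong_induction_on with
  | _ n ih =>
  intro V _ _ X _ _ T _ hcard hT b1 b2 hbsym hb1pos hb1sum hmarg
  have hne : Nonempty V := hT.isConnected.nonempty
  have hpos : 1 ≤ Fintype.card V := Fintype.card_pos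
  by_cases h2 : 2 ≤ Fintype.card V
  · -- inductive step
    obtain ⟨v, hdegv⟩ := tree_exists_leaf T hT h2
    have hdc : (T.neighborFinset v).card = 1 := hdegv
    obtain ⟨u, hnf⟩ := Finset.card_eq_one.1 hdc
    have hADJ : ∀ w, T.Adj v w ↔ w = u := fun w => by
      rw [← SimpleGraph.mem_neighborFinset, hnf, Finset.mem_singleton]
    have hvu : T.Adj v u := (hADJ u).2 rfl
    have huv : u ≠ v := hvu.ne'
    set T' : SimpleGraph {w : V // w ≠ v} := T.comap (Subtype.val : {w : V // w ≠ v} → V)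
      with hT'def
    have hT' : T'.IsTree := comap_isTree hT hnf
    have hcard' : Fintype.card {w : V // w ≠ v} = n - 1 := by
      rw [Fintype.card_subtype, Finset.filter_ne' Finset.univ v,
        Finset.card_erase_of_mem (Finset.mem_univ v), Finset.card_univ, hcard]
    have hbsym' : ∀ (i j : {w : V // w ≠ v}) (s : X i.val) (t : X j.val),
        b2 i.val j.val s t = b2 j.val i.val t s := fun i j s t => hbsym i.val j.val s t
    obtain ⟨IH1, IH2⟩ := ih (n - 1) (by omega) {w : V // w ≠ v} inferInstance inferInstance
      (fun w => X w.val) inferInstance inferInstance T' inferInstance hcard' hT'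
      (fun w => b1 w.val) (fun w₁ w₂ => b2 w₁.val w₂.val) hbsym'
      (fun i s => hb1pos i.val s) (fun i => hb1sum i.val)
      (fun i j hij s => hmarg i.val j.val hij s)
    set q := treeQ T b1 b2 hbsym with hqdef
    set q' := treeQ T' (fun w : {w : V // w ≠ v} => b1 w.val)
      (fun w₁ w₂ => b2 w₁.val w₂.val) hbsym' with hq'def
    set E := Equiv.piSplitAt v X with hEdef
    set u' : {w : V // w ≠ v} := ⟨u, huv⟩ with hu'def
    have hEval : ∀ (a : X v) (x' : (j : {w : V // w ≠ v}) → X j.val),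
        (E.symm (a, x')) v = a ∧ (fun j : {w : V // w ≠ v} => (E.symm (a, x')) j.val) = x' := by
      intro a x'
      have h := E.apply_symm_apply (a, x')
      exact ⟨congrArg Prod.fst h, congrArg Prod.snd h⟩
    have hx'u : ∀ (a : X v) (x' : (j : {w : V // w ≠ v}) → X j.val),
        (E.symm (a, x')) u = x' u' := fun a x' => congrFun (hEval a x').2 u'
    have hsplit : ∀ x : (i : V) → X i,
        q x = q' (fun j : {w : V // w ≠ v} => x j.val)
          * (b2 v u (x v) (x u) * (b1 u (x u))⁻¹) := by
      intro x
      have h1 : (∏ e ∈ T.edgeFinset,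
            Sym2.lift ⟨fun i j => b2 i j (x i) (x j), fun i j => hbsym i j (x i) (x j)⟩ e)
          = b2 v u (x v) (x u) * ∏ e' ∈ T'.edgeFinset,
              Sym2.lift ⟨fun i j => b2 i.val j.val (x i.val) (x j.val),
                fun i j => hbsym' i j (x i.val) (x j.val)⟩ e' := by
        rw [prod_edge_split hnf]
        congr 1
        refine Finset.prod_congr rfl fun e' _ => ?_
        induction e' with
        | _ a b => rw [Sym2.map_pair_eq, Sym2.lift_mk, Sym2.lift_mk]
      have hvert : (∏ i : V, (b1 i (x i)) ^ ((1:ℤ) - (T.degree i : ℤ)))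
          = (∏ j : {w : V // w ≠ v}, (b1 j.val (x j.val)) ^ ((1:ℤ) - (T'.degree j : ℤ)))
            * (b1 u (x u))⁻¹ := by
        rw [← Finset.mul_prod_erase Finset.univ _ (Finset.mem_univ v), hdegv]
        simp only [Nat.cast_one, sub_self, zpow_zero, one_mul]
        rw [Finset.prod_subtype (p := fun w : V => w ≠ v) (Finset.univ.erase v)
          (fun y => by simp) (fun i => (b1 i (x i)) ^ ((1:ℤ) - (T.degree i : ℤ)))]
        rw [← Finset.mul_prod_erase Finset.univ
          (fun j : {w : V // w ≠ v} => (b1 j.val (x j.val)) ^ ((1:ℤ) - (T.degree j.val : ℤ)))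
          (Finset.mem_univ u')]
        rw [← Finset.mul_prod_erase Finset.univ
          (fun j : {w : V // w ≠ v} => (b1 j.val (x j.val)) ^ ((1:ℤ) - (T'.degree j : ℤ)))
          (Finset.mem_univ u')]
        have herase : (∏ j ∈ Finset.univ.erase u',
              (b1 j.val (x j.val)) ^ ((1:ℤ) - (T.degree j.val : ℤ)))
            = ∏ j ∈ Finset.univ.erase u',
              (b1 j.val (x j.val)) ^ ((1:ℤ) - (T'.degree j : ℤ)) := by
          refine Finset.prod_congr rfl fun j hj => ?_
          rw [comap_degree_eq hnf j (fun h => (Finset.mem_erase.1 hj).1 (Subtype.ext h))]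
        rw [herase]
        have hD := comap_degree_u hnf huv
        have hexp : (1:ℤ) - (T.degree u : ℤ) = ((1:ℤ) - (T'.degree u' : ℤ)) - 1 := by
          rw [← hD]; push_cast; ring
        rw [hexp, zpow_sub₀ (hb1pos u (x u)).ne', zpow_one]
        ring
      calc q x = (∏ e ∈ T.edgeFinset,
            Sym2.lift ⟨fun i j => b2 i j (x i) (x j), fun i j => hbsym i j (x i) (x j)⟩ e)
          * ∏ i : V, (b1 i (x i)) ^ ((1:ℤ) - (T.degree i : ℤ)) := rfl
        _ = (b2 v u (x v) (x u) * ∏ e' ∈ T'.edgeFinset,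
              Sym2.lift ⟨fun i j => b2 i.val j.val (x i.val) (x j.val),
                fun i j => hbsym' i j (x i.val) (x j.val)⟩ e')
            * ((∏ j : {w : V // w ≠ v}, (b1 j.val (x j.val)) ^ ((1:ℤ) - (T'.degree j : ℤ)))
              * (b1 u (x u))⁻¹) := by rw [h1, hvert]
        _ = q' (fun j : {w : V // w ≠ v} => x j.val)
            * (b2 v u (x v) (x u) * (b1 u (x u))⁻¹) := by
          have hq'x : q' (fun j : {w : V // w ≠ v} => x j.val)
              = (∏ e' ∈ T'.edgeFinset,
                  Sym2.lift ⟨fun i j => b2 i.val j.val (x i.val) (x j.val),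
                    fun i j => hbsym' i j (x i.val) (x j.val)⟩ e')
                * ∏ j : {w : V // w ≠ v}, (b1 j.val (x j.val)) ^ ((1:ℤ) - (T'.degree j : ℤ)) :=
            rfl
          rw [hq'x]; ring
    have hqval : ∀ (a : X v) (x' : (j : {w : V // w ≠ v}) → X j.val),
        q (E.symm (a, x')) = q' x' * (b2 v u a (x' u') * (b1 u (x' u'))⁻¹) := by
      intro a x'
      rw [hsplit (E.symm (a, x')), (hEval a x').2, (hEval a x').1, hx'u a x']
    have hsum_split : ∀ f : ((i : V) → X i) → ℝ,
        ∑ x, f x = ∑ x' : (j : {w : V // w ≠ v}) → X j.val, ∑ a : X v, f (E.symm (a, x')) := by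
      intro f
      rw [← Equiv.sum_comp E.symm f, Fintype.sum_prod_type]
      exact Finset.sum_comm
    have hsumv : ∀ x' : (j : {w : V // w ≠ v}) → X j.val,
        ∑ a : X v, q (E.symm (a, x')) = q' x' := by
      intro x'
      rw [Finset.sum_congr rfl fun a _ => hqval a x', ← Finset.mul_sum, ← Finset.sum_mul]
      have hb : ∑ a : X v, b2 v u a (x' u') = b1 u (x' u') := by
        rw [Finset.sum_congr rfl fun a _ => hbsym v u a (x' u')]
        exact hmarg u v hvu.symm (x' u')
      rw [hb, mul_inv_cancel₀ (hb1pos u (x' u')).ne', mul_one]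
    have hase : ∀ (s : X v) (t : X u), marg2 q v u s t = b2 v u s t := by
      intro s t
      simp only [marg2]
      rw [Finset.sum_filter,
        hsum_split (fun x => if x v = s ∧ x u = t then q x else 0)]
      have hinner : ∀ x' : (j : {w : V // w ≠ v}) → X j.val,
          (∑ a : X v, if (E.symm (a, x')) v = s ∧ (E.symm (a, x')) u = t
              then q (E.symm (a, x')) else 0)
            = if x' u' = t then q' x' * (b2 v u s t * (b1 u t)⁻¹) else 0 := by
        intro x'
        have hstep : ∀ a : X v,
            (if (E.symm (a, x')) v = s ∧ (E.symm (a, x')) u = t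
              then q (E.symm (a, x')) else 0)
            = if a = s ∧ x' u' = t then q (E.symm (a, x')) else 0 := by
          intro a
          simp only [(hEval a x').1, hx'u a x']
        rw [Finset.sum_congr rfl fun a _ => hstep a]
        by_cases ht : x' u' = t
        · simp only [ht, and_true, if_pos]
          rw [Finset.sum_ite_eq' Finset.univ s (fun a => q (E.symm (a, x')))]
          simp only [Finset.mem_univ, if_true]
          rw [hqval s x', ht]
        · simp only [ht, and_false, if_false, Finset.sum_const_zero]
      rw [Finset.sum_congr rfl fun x' _ => hinner x', ← Finset.sum_filter, ← Finset.sum_mul]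
      have hm : (∑ x' ∈ Finset.univ.filter
            (fun x' : (j : {w : V // w ≠ v}) → X j.val => x' u' = t), q' x') = b1 u t :=
        IH1 u' t
      rw [hm, show b1 u t * (b2 v u s t * (b1 u t)⁻¹)
          = b2 v u s t * (b1 u t * (b1 u t)⁻¹) from by ring,
        mul_inv_cancel₀ (hb1pos u t).ne', mul_one]
    have hmargq1 : ∀ (i : V) (s : X i), marg1 q i s = b1 i s := by
      intro i s
      by_cases hiv : i = v
      · subst hiv
        simp only [marg1]
        rw [Finset.sum_filter, hsum_split (fun x => if x i = s then q x else 0)]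
        have hinner : ∀ x' : (j : {w : V // w ≠ i}) → X j.val,
            (∑ a : X i, if (E.symm (a, x')) i = s then q (E.symm (a, x')) else 0)
              = q' x' * (b2 i u s (x' u') * (b1 u (x' u'))⁻¹) := by
          intro x'
          have hstep : ∀ a : X i,
              (if (E.symm (a, x')) i = s then q (E.symm (a, x')) else 0)
                = if a = s then q (E.symm (a, x')) else 0 := by
            intro a
            simp only [(hEval a x').1]
          rw [Finset.sum_congr rfl fun a _ => hstep a]
          rw [Finset.sum_ite_eq' Finset.univ s (fun a => q (E.symm (a, x')))]
          simp only [Finset.mem_univ, if_true]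
          exact hqval s x'
        rw [Finset.sum_congr rfl fun x' _ => hinner x']
        rw [sum_mul_marg1 q' u' (fun t => b2 i u s t * (b1 u t)⁻¹)]
        have hterm : ∀ t : X u, marg1 q' u' t * (b2 i u s t * (b1 u t)⁻¹) = b2 i u s t := by
          intro t
          have hm : marg1 q' u' t = b1 u t := IH1 u' t
          rw [hm, show b1 u t * (b2 i u s t * (b1 u t)⁻¹)
              = b2 i u s t * (b1 u t * (b1 u t)⁻¹) from by ring,
            mul_inv_cancel₀ (hb1pos u t).ne', mul_one]
        rw [Finset.sum_congr rfl fun t _ => hterm t]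
        exact hmarg i u hvu s
      · simp only [marg1]
        rw [Finset.sum_filter, hsum_split (fun x => if x i = s then q x else 0)]
        have hinner : ∀ x' : (j : {w : V // w ≠ v}) → X j.val,
            (∑ a : X v, if (E.symm (a, x')) i = s then q (E.symm (a, x')) else 0)
              = if x' ⟨i, hiv⟩ = s then q' x' else 0 := by
          intro x'
          have hstep : ∀ a : X v,
              (if (E.symm (a, x')) i = s then q (E.symm (a, x')) else 0)
                = if x' ⟨i, hiv⟩ = s then q (E.symm (a, x')) else 0 := by
            intro a
            have hc : (E.symm (a, x')) i = x' ⟨i, hiv⟩ := congrFun (hEval a x').2 ⟨i, hiv⟩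
            simp only [hc]
          rw [Finset.sum_congr rfl fun a _ => hstep a]
          by_cases hs : x' ⟨i, hiv⟩ = s
          · simp only [hs, if_true]
            exact hsumv x'
          · simp only [hs, if_false, Finset.sum_const_zero]
        rw [Finset.sum_congr rfl fun x' _ => hinner x', ← Finset.sum_filter]
        exact IH1 ⟨i, hiv⟩ s
    refine ⟨hmargq1, ?_⟩
    intro i j hij s t
    by_cases hiv : i = v
    · subst hiv
      have hj : j = u := (hADJ j).1 hij
      subst hj
      exact hase s t
    · by_cases hjv : j = v
      · subst hjv
        have hi : i = u := (hADJ i).1 hij.symm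
        subst hi
        rw [marg2_comm q i j s t, hase t s]
        exact (hbsym i j s t).symm
      · simp only [marg2]
        rw [Finset.sum_filter, hsum_split (fun x => if x i = s ∧ x j = t then q x else 0)]
        have hinner : ∀ x' : (j' : {w : V // w ≠ v}) → X j'.val,
            (∑ a : X v, if (E.symm (a, x')) i = s ∧ (E.symm (a, x')) j = t
                then q (E.symm (a, x')) else 0)
              = if x' ⟨i, hiv⟩ = s ∧ x' ⟨j, hjv⟩ = t then q' x' else 0 := by
          intro x'
          have hstep : ∀ a : X v,
              (if (E.symm (a, x')) i = s ∧ (E.symm (a, x')) j = t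
                then q (E.symm (a, x')) else 0)
              = if x' ⟨i, hiv⟩ = s ∧ x' ⟨j, hjv⟩ = t then q (E.symm (a, x')) else 0 := by
            intro a
            have hci : (E.symm (a, x')) i = x' ⟨i, hiv⟩ := congrFun (hEval a x').2 ⟨i, hiv⟩
            have hcj : (E.symm (a, x')) j = x' ⟨j, hjv⟩ := congrFun (hEval a x').2 ⟨j, hjv⟩
            simp only [hci, hcj]
          rw [Finset.sum_congr rfl fun a _ => hstep a]
          by_cases hs : x' ⟨i, hiv⟩ = s ∧ x' ⟨j, hjv⟩ = t
          · simp only [if_pos hs]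
            exact hsumv x'
          · simp only [if_neg hs, Finset.sum_const_zero]
        rw [Finset.sum_congr rfl fun x' _ => hinner x', ← Finset.sum_filter]
        exact IH2 ⟨i, hiv⟩ ⟨j, hjv⟩ hij s t
  · -- base case : exactly one vertex
    have hcard1 : Fintype.card V = 1 := by omega
    obtain ⟨i0, hi0⟩ := Fintype.card_eq_one_iff.1 hcard1
    have hidef : ∀ j i : V, j = i := fun j i => (hi0 j).trans (hi0 i).symm
    have hE : T.edgeFinset = ∅ := by
      ext e
      simp only [Finset.notMem_empty, iff_false, SimpleGraph.mem_edgeFinset]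
      induction e with
      | _ a b =>
        rw [SimpleGraph.mem_edgeSet]
        intro h
        exact h.ne (hidef a b)
    have hdeg : ∀ i, T.degree i = 0 := by
      intro i
      rw [SimpleGraph.degree, Finset.card_eq_zero]
      ext j
      simp only [Finset.notMem_empty, iff_false, SimpleGraph.mem_neighborFinset]
      intro h
      exact h.ne (hidef i j)
    have hq : ∀ (i : V) (x : (i : V) → X i), treeQ T b1 b2 hbsym x = b1 i (x i) := by
      intro i x
      unfold treeQ
      rw [hE, Finset.prod_empty, one_mul]
      rw [Finset.prod_eq_single i (fun b _ hb => absurd (hidef b i) hb)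
        (fun h => absurd (Finset.mem_univ i) h)]
      rw [hdeg i]
      norm_num
    constructor
    · intro i s
      -- the filter is a singleton
      have hx0 : ∀ x : (i : V) → X i, x ∈ Finset.univ.filter
          (fun x : (i : V) → X i => x i = s) ↔
          x = fun j => cast (congrArg X (hidef i j)) s := by
        intro x
        simp only [Finset.mem_filter, Finset.mem_univ, true_and]
        constructor
        · intro h
          funext j
          have hj := hidef j i
          subst hj
          rw [h]
          exact (eq_of_heq (cast_heq _ s)).symm
        · intro h
          rw [h]
          exact eq_of_heq (cast_heq _ s)
      have hfil : Finset.univ.filter (fun x : (i : V) → X i => x i = s)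
          = {fun j => cast (congrArg X (hidef i j)) s} := by
        ext x; rw [hx0, Finset.mem_singleton]
      rw [marg1, hfil, Finset.sum_singleton, hq i]
      exact congrArg (b1 i) (eq_of_heq (cast_heq _ s))
    · intro i j hij s t
      exact absurd (hidef i j) hij.ne

end CoreAux

section helpers
variable {V : Type*} [Fintype V] [DecidableEq V]
  {X : V → Type*} [∀ i, Fintype (X i)] [∀ i, DecidableEq (X i)]

lemma lift_pos_of_mem {T : SimpleGraph V} [DecidableRel T.Adj]
    {c2 : (i j : V) → X i → X j → ℝ} (hcsym : ∀ i j s t, c2 i j s t = c2 j i t s)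
    (hpos : ∀ i j, T.Adj i j → ∀ s t, 0 < c2 i j s t) (x : (i : V) → X i)
    {e : Sym2 V} (he : e ∈ T.edgeFinset) :
    0 < Sym2.lift ⟨fun i j => c2 i j (x i) (x j), fun i j => hcsym i j (x i) (x j)⟩ e := by
  induction e with
  | _ i j =>
    rw [Sym2.lift_mk]
    exact hpos i j (T.mem_edgeSet.1 (SimpleGraph.mem_edgeFinset.1 he)) (x i) (x j)

lemma prod_edge_lift_pos {T : SimpleGraph V} [DecidableRel T.Adj]
    {c2 : (i j : V) → X i → X j → ℝ} (hcsym : ∀ i j s t, c2 i j s t = c2 j i t s)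
    (hpos : ∀ i j, T.Adj i j → ∀ s t, 0 < c2 i j s t) (x : (i : V) → X i) :
    0 < ∏ e ∈ T.edgeFinset,
      Sym2.lift ⟨fun i j => c2 i j (x i) (x j), fun i j => hcsym i j (x i) (x j)⟩ e :=
  Finset.prod_pos fun _ he => lift_pos_of_mem hcsym hpos x he

lemma treeQ_pos {T : SimpleGraph V} [DecidableRel T.Adj]
    {b1 : (i : V) → X i → ℝ} {b2 : (i j : V) → X i → X j → ℝ}
    (hbsym : ∀ i j s t, b2 i j s t = b2 j i t s)
    (hb1pos : ∀ i s, 0 < b1 i s)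
    (hb2pos : ∀ i j, T.Adj i j → ∀ s t, 0 < b2 i j s t) (x : (i : V) → X i) :
    0 < treeQ T b1 b2 hbsym x :=
  mul_pos (prod_edge_lift_pos hbsym hb2pos x)
    (Finset.prod_pos fun i _ => zpow_pos (hb1pos i (x i)) _)

lemma log_prod_edge {T : SimpleGraph V} [DecidableRel T.Adj]
    {c2 : (i j : V) → X i → X j → ℝ} (hcsym : ∀ i j s t, c2 i j s t = c2 j i t s)
    (hlsym : ∀ (i j : V) (s : X i) (t : X j), Real.log (c2 i j s t) = Real.log (c2 j i t s))
    (hpos : ∀ i j, T.Adj i j → ∀ s t, 0 < c2 i j s t) (x : (i : V) → X i) :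
    Real.log (∏ e ∈ T.edgeFinset,
        Sym2.lift ⟨fun i j => c2 i j (x i) (x j), fun i j => hcsym i j (x i) (x j)⟩ e)
      = ∑ e ∈ T.edgeFinset,
          Sym2.lift ⟨fun i j => Real.log (c2 i j (x i) (x j)),
            fun i j => hlsym i j (x i) (x j)⟩ e := by
  rw [Real.log_prod (fun e he => (lift_pos_of_mem hcsym hpos x he).ne')]
  refine Finset.sum_congr rfl fun e he => ?_
  induction e with
  | _ i j => rw [Sym2.lift_mk, Sym2.lift_mk]

lemma log_treeQ {T : SimpleGraph V} [DecidableRel T.Adj]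
    {b1 : (i : V) → X i → ℝ} {b2 : (i j : V) → X i → X j → ℝ}
    (hbsym : ∀ i j s t, b2 i j s t = b2 j i t s)
    (hlsym : ∀ (i j : V) (s : X i) (t : X j), Real.log (b2 i j s t) = Real.log (b2 j i t s))
    (hb1pos : ∀ i s, 0 < b1 i s)
    (hb2pos : ∀ i j, T.Adj i j → ∀ s t, 0 < b2 i j s t) (x : (i : V) → X i) :
    Real.log (treeQ T b1 b2 hbsym x)
      = (∑ e ∈ T.edgeFinset,
          Sym2.lift ⟨fun i j => Real.log (b2 i j (x i) (x j)),
            fun i j => hlsym i j (x i) (x j)⟩ e)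
        + ∑ i : V, ((1:ℝ) - (T.degree i : ℝ)) * Real.log (b1 i (x i)) := by
  have h1 : Real.log (treeQ T b1 b2 hbsym x)
      = Real.log (∏ e ∈ T.edgeFinset,
          Sym2.lift ⟨fun i j => b2 i j (x i) (x j), fun i j => hbsym i j (x i) (x j)⟩ e)
        + Real.log (∏ i : V, (b1 i (x i)) ^ ((1:ℤ) - (T.degree i : ℤ))) :=
    Real.log_mul (prod_edge_lift_pos hbsym hb2pos x).ne'
      (Finset.prod_pos fun i _ => zpow_pos (hb1pos i (x i)) _).ne'
  rw [h1, log_prod_edge hbsym hlsym hb2pos x,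
    Real.log_prod (fun i _ => (zpow_pos (hb1pos i (x i)) ((1:ℤ) - (T.degree i : ℤ))).ne')]
  congr 1
  refine Finset.sum_congr rfl fun i _ => ?_
  rw [Real.log_zpow]
  push_cast
  ring

lemma sum_weight_edge_expand (T : SimpleGraph V) [DecidableRel T.Adj]
    (r : ((i : V) → X i) → ℝ) (b2 c2 : (i j : V) → X i → X j → ℝ)
    (hcsym : ∀ i j s t, c2 i j s t = c2 j i t s)
    (hsym2 : ∀ i j : V, (fun i j => ∑ s : X i, ∑ t : X j, b2 i j s t * c2 i j s t) i j
      = (fun i j => ∑ s : X i, ∑ t : X j, b2 i j s t * c2 i j s t) j i)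
    (hm2 : ∀ i j, T.Adj i j → ∀ s t, marg2 r i j s t = b2 i j s t) :
    ∑ x, r x * (∑ e ∈ T.edgeFinset,
        Sym2.lift ⟨fun i j => c2 i j (x i) (x j), fun i j => hcsym i j (x i) (x j)⟩ e)
      = ∑ e ∈ T.edgeFinset,
          Sym2.lift ⟨fun i j => ∑ s : X i, ∑ t : X j, b2 i j s t * c2 i j s t, hsym2⟩ e := by
  rw [Finset.sum_congr rfl fun x (_ : x ∈ Finset.univ) => Finset.mul_sum _ _ _]
  rw [Finset.sum_comm]
  refine Finset.sum_congr rfl fun e he => ?_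
  induction e with
  | _ i j =>
    have hadj : T.Adj i j := T.mem_edgeSet.1 (SimpleGraph.mem_edgeFinset.1 he)
    simp only [Sym2.lift_mk]
    rw [sum_mul_marg2 r i j (fun s t => c2 i j s t)]
    exact Finset.sum_congr rfl fun s _ => Finset.sum_congr rfl fun t _ => by
      rw [hm2 i j hadj s t]

lemma sum_weight_node_expand (r : ((i : V) → X i) → ℝ) (g : (i : V) → X i → ℝ) :
    ∑ x, r x * (∑ i, g i (x i)) = ∑ i, ∑ s, marg1 r i s * g i s := by
  rw [Finset.sum_congr rfl fun x (_ : x ∈ Finset.univ) => Finset.mul_sum _ _ _]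
  rw [Finset.sum_comm]
  exact Finset.sum_congr rfl fun i _ => sum_mul_marg1 r i (g i)

end helpers

end BetheAux

/-- **The Bethe free energy of a tree MRF is minimized exactly at the true
marginals, with minimum `-ln Z`.**
For a pairwise Markov random field on a tree `T` with strictly positive
symmetric edge potentials `ψ`, `p̃(x) = Π_{{i,j}∈E(T)} ψ_{ij}(x_i,x_j)`,
`Z = Σ_x p̃(x)`, and `p = p̃/Z`, every consistent belief system `(b1, b2)`
satisfies `F_B ≥ -ln Z`, and `F_B = -ln Z` holds if and only if the beliefs
are the exact marginals of `p` (node beliefs `b_i = p_i` and edge beliefs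
`b_{ij} = p_{ij}`).  In particular the minimum of the Bethe free energy over
all consistent belief systems equals `-ln Z`. -/
theorem betheFreeEnergy_ge_neg_logZ (V : Type*) [Fintype V] [DecidableEq V] [Nonempty V]
    (X : V → Type*) [∀ i, Fintype (X i)] [∀ i, Nonempty (X i)] [∀ i, DecidableEq (X i)]
    (T : SimpleGraph V) [DecidableRel T.Adj] (hT : T.IsTree)
    (ψ2 : (i j : V) → X i → X j → ℝ)
    (hψsym : ∀ i j s t, ψ2 i j s t = ψ2 j i t s)
    (hψpos : ∀ i j, T.Adj i j → ∀ s t, 0 < ψ2 i j s t)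
    (ptil : ((i : V) → X i) → ℝ)
    (hptil : ∀ x, ptil x = ∏ e ∈ T.edgeFinset,
      Sym2.lift ⟨fun i j => ψ2 i j (x i) (x j), fun i j => hψsym i j (x i) (x j)⟩ e)
    (p : ((i : V) → X i) → ℝ)
    (hp : ∀ x, p x = ptil x / ∑ y : (i : V) → X i, ptil y)
    (b1 : (i : V) → X i → ℝ) (b2 : (i j : V) → X i → X j → ℝ)
    (hb1pos : ∀ i s, 0 < b1 i s) (hb1sum : ∀ i, ∑ s, b1 i s = 1)
    (hbsym : ∀ i j s t, b2 i j s t = b2 j i t s)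
    (hb2pos : ∀ i j, T.Adj i j → ∀ s t, 0 < b2 i j s t)
    (hb2sum : ∀ i j, T.Adj i j → ∑ s : X i, ∑ t : X j, b2 i j s t = 1)
    (hmarg : ∀ i j, T.Adj i j → ∀ s : X i, ∑ t : X j, b2 i j s t = b1 i s) :
    -Real.log (∑ y : (i : V) → X i, ptil y)
        ≤ betheFreeEnergy T b1 b2 ψ2 hbsym hψsym ∧
      (betheFreeEnergy T b1 b2 ψ2 hbsym hψsym
          = -Real.log (∑ y : (i : V) → X i, ptil y) ↔
        (∀ i : V, ∀ s : X i, b1 i s = marg1 p i s) ∧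
          ∀ i j : V, T.Adj i j → ∀ (s : X i) (t : X j), b2 i j s t = marg2 p i j s t) := by
  classical
  set Z := ∑ y : (i : V) → X i, ptil y with hZdef
  have hptilpos : ∀ x, 0 < ptil x := fun x => by
    rw [hptil x]
    exact prod_edge_lift_pos hψsym hψpos x
  haveI hPiNe : Nonempty ((i : V) → X i) := ⟨fun i => Classical.arbitrary _⟩
  have hZpos : 0 < Z := Finset.sum_pos (fun y _ => hptilpos y) Finset.univ_nonempty
  have hppos : ∀ x, 0 < p x := fun x => by rw [hp x]; exact div_pos (hptilpos x) hZpos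
  have hpsum : ∑ x, p x = 1 := by
    rw [Finset.sum_congr rfl fun x _ => hp x, ← Finset.sum_div]
    exact div_self hZpos.ne'
  obtain ⟨hm1, hm2⟩ := treeQ_marg (Fintype.card V) V inferInstance inferInstance X
    inferInstance inferInstance T inferInstance rfl hT b1 b2 hbsym hb1pos hb1sum hmarg
  set q := treeQ T b1 b2 hbsym with hqdef
  have hqpos : ∀ x, 0 < q x := fun x => treeQ_pos hbsym hb1pos hb2pos x
  have hqsum : ∑ x, q x = 1 := by
    obtain ⟨i0⟩ := ‹Nonempty V›
    rw [← sum_marg1 q i0, Finset.sum_congr rfl fun s _ => hm1 i0 s]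
    exact hb1sum i0
  have hlb2sym : ∀ (i j : V) (s : X i) (t : X j),
      Real.log (b2 i j s t) = Real.log (b2 j i t s) := fun i j s t => by rw [hbsym i j s t]
  have hlψsym : ∀ (i j : V) (s : X i) (t : X j),
      Real.log (ψ2 i j s t) = Real.log (ψ2 j i t s) := fun i j s t => by rw [hψsym i j s t]
  have hratsym : ∀ (i j : V) (s : X i) (t : X j),
      Real.log (b2 i j s t / ψ2 i j s t) = Real.log (b2 j i t s / ψ2 j i t s) :=
    fun i j s t => by rw [hbsym i j s t, hψsym i j s t]
  have hrep : ∀ r : ((i : V) → X i) → ℝ,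
      (∀ i s, marg1 r i s = b1 i s) →
      (∀ i j, T.Adj i j → ∀ s t, marg2 r i j s t = b2 i j s t) →
      ∑ x, r x * (Real.log (q x) - Real.log (ptil x))
        = betheFreeEnergy T b1 b2 ψ2 hbsym hψsym := by
    intro r hr1 hr2
    have hlog : ∀ x, Real.log (q x) - Real.log (ptil x)
        = (∑ e ∈ T.edgeFinset, Sym2.lift ⟨fun i j =>
              Real.log (b2 i j (x i) (x j) / ψ2 i j (x i) (x j)),
              fun i j => hratsym i j (x i) (x j)⟩ e)
          + ∑ i : V, ((1:ℝ) - (T.degree i : ℝ)) * Real.log (b1 i (x i)) := by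
      intro x
      rw [hqdef, hptil x, log_treeQ hbsym hlb2sym hb1pos hb2pos x,
        log_prod_edge hψsym hlψsym hψpos x]
      have hsub : (∑ e ∈ T.edgeFinset, Sym2.lift ⟨fun i j => Real.log (b2 i j (x i) (x j)),
              fun i j => hlb2sym i j (x i) (x j)⟩ e)
            - (∑ e ∈ T.edgeFinset, Sym2.lift ⟨fun i j => Real.log (ψ2 i j (x i) (x j)),
              fun i j => hlψsym i j (x i) (x j)⟩ e)
          = ∑ e ∈ T.edgeFinset, Sym2.lift ⟨fun i j =>
              Real.log (b2 i j (x i) (x j) / ψ2 i j (x i) (x j)),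
              fun i j => hratsym i j (x i) (x j)⟩ e := by
        rw [← Finset.sum_sub_distrib]
        refine Finset.sum_congr rfl fun e he => ?_
        induction e with
        | _ i j =>
          have hadj : T.Adj i j := T.mem_edgeSet.1 (SimpleGraph.mem_edgeFinset.1 he)
          simp only [Sym2.lift_mk]
          rw [Real.log_div (hb2pos i j hadj _ _).ne' (hψpos i j hadj _ _).ne']
      linarith [hsub]
    have key1 := sum_weight_edge_expand T r b2
      (fun i j s t => Real.log (b2 i j s t / ψ2 i j s t)) hratsym
      (betheEdgeTerm_symm b2 ψ2 hbsym hψsym) hr2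
    have key2 := sum_weight_node_expand r
      (fun i s => ((1:ℝ) - (T.degree i : ℝ)) * Real.log (b1 i s))
    have hnode : ∀ i : V,
        ∑ s, marg1 r i s * (((1:ℝ) - (T.degree i : ℝ)) * Real.log (b1 i s))
          = -(((T.degree i : ℝ) - 1) * ∑ s, b1 i s * Real.log (b1 i s)) := by
      intro i
      rw [Finset.sum_congr rfl fun s _ => by rw [hr1 i s]]
      calc ∑ s, b1 i s * (((1:ℝ) - (T.degree i : ℝ)) * Real.log (b1 i s))
          = ∑ s, -(((T.degree i : ℝ) - 1) * (b1 i s * Real.log (b1 i s))) :=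
            Finset.sum_congr rfl fun s _ => by ring
        _ = -∑ s, ((T.degree i : ℝ) - 1) * (b1 i s * Real.log (b1 i s)) :=
            Finset.sum_neg_distrib _
        _ = -(((T.degree i : ℝ) - 1) * ∑ s, b1 i s * Real.log (b1 i s)) := by
            rw [← Finset.mul_sum]
    calc ∑ x, r x * (Real.log (q x) - Real.log (ptil x))
        = ∑ x, (r x * (∑ e ∈ T.edgeFinset, Sym2.lift ⟨fun i j =>
              Real.log (b2 i j (x i) (x j) / ψ2 i j (x i) (x j)),
              fun i j => hratsym i j (x i) (x j)⟩ e)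
            + r x * ∑ i : V, ((1:ℝ) - (T.degree i : ℝ)) * Real.log (b1 i (x i))) :=
          Finset.sum_congr rfl fun x _ => by rw [hlog x]; ring
      _ = (∑ x, r x * (∑ e ∈ T.edgeFinset, Sym2.lift ⟨fun i j =>
              Real.log (b2 i j (x i) (x j) / ψ2 i j (x i) (x j)),
              fun i j => hratsym i j (x i) (x j)⟩ e))
          + ∑ x, r x * ∑ i : V, ((1:ℝ) - (T.degree i : ℝ)) * Real.log (b1 i (x i)) :=
          Finset.sum_add_distrib
      _ = (∑ e ∈ T.edgeFinset,
            Sym2.lift ⟨fun i j => ∑ s : X i, ∑ t : X j,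
                b2 i j s t * Real.log (b2 i j s t / ψ2 i j s t),
              betheEdgeTerm_symm b2 ψ2 hbsym hψsym⟩ e)
          + ∑ i : V, ∑ s, marg1 r i s * (((1:ℝ) - (T.degree i : ℝ)) * Real.log (b1 i s)) := by
          rw [key1, key2]
      _ = (∑ e ∈ T.edgeFinset,
            Sym2.lift ⟨fun i j => ∑ s : X i, ∑ t : X j,
                b2 i j s t * Real.log (b2 i j s t / ψ2 i j s t),
              betheEdgeTerm_symm b2 ψ2 hbsym hψsym⟩ e)
          + -∑ i : V, ((T.degree i : ℝ) - 1) * ∑ s, b1 i s * Real.log (b1 i s) := by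
          rw [Finset.sum_congr rfl fun i _ => hnode i, Finset.sum_neg_distrib]
      _ = betheFreeEnergy T b1 b2 ψ2 hbsym hψsym := by
          rw [betheFreeEnergy, ← sub_eq_add_neg]
  have hFBq : betheFreeEnergy T b1 b2 ψ2 hbsym hψsym
      = ∑ x, q x * (Real.log (q x) - Real.log (ptil x)) := (hrep q hm1 hm2).symm
  have hlogp : ∀ x, Real.log (p x) = Real.log (ptil x) - Real.log Z := fun x => by
    rw [hp x]; exact Real.log_div (hptilpos x).ne' hZpos.ne'
  have hKL : ∑ x, q x * (Real.log (q x) - Real.log (p x))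
      = betheFreeEnergy T b1 b2 ψ2 hbsym hψsym + Real.log Z := by
    rw [hFBq]
    rw [Finset.sum_congr rfl fun x _ =>
      show q x * (Real.log (q x) - Real.log (p x))
          = q x * (Real.log (q x) - Real.log (ptil x)) + q x * Real.log Z from by
        rw [hlogp x]; ring]
    rw [Finset.sum_add_distrib, ← Finset.sum_mul, hqsum, one_mul]
  have hKLge : 0 ≤ ∑ x, q x * (Real.log (q x) - Real.log (p x)) :=
    gibbs_nonneg q p hqpos hppos hqsum hpsum
  have hFB_ge : -Real.log Z ≤ betheFreeEnergy T b1 b2 ψ2 hbsym hψsym := by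
    have h := hKLge
    rw [hKL] at h
    linarith
  refine ⟨hFB_ge, ?_, ?_⟩
  · intro heq
    have h0 : ∑ x, q x * (Real.log (q x) - Real.log (p x)) = 0 := by
      rw [hKL, heq]; ring
    have hqp := (gibbs_eq_iff q p hqpos hppos hqsum hpsum).1 h0
    constructor
    · intro i s
      have h1 : marg1 q i s = marg1 p i s := Finset.sum_congr rfl fun x _ => hqp x
      rw [← hm1 i s]; exact h1
    · intro i j hij s t
      have h1 : marg2 q i j s t = marg2 p i j s t := Finset.sum_congr rfl fun x _ => hqp x
      rw [← hm2 i j hij s t]; exact h1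
  · rintro ⟨hb1p, hb2p⟩
    have hFBp : betheFreeEnergy T b1 b2 ψ2 hbsym hψsym
        = ∑ x, p x * (Real.log (q x) - Real.log (ptil x)) :=
      (hrep p (fun i s => (hb1p i s).symm) (fun i j hij s t => (hb2p i j hij s t).symm)).symm
    have h2 : betheFreeEnergy T b1 b2 ψ2 hbsym hψsym + Real.log Z
        = ∑ x, p x * (Real.log (q x) - Real.log (p x)) := by
      rw [hFBp]
      rw [Finset.sum_congr rfl fun x (_ : x ∈ Finset.univ) =>
        show p x * (Real.log (q x) - Real.log (p x))
            = p x * (Real.log (q x) - Real.log (ptil x)) + p x * Real.log Z from by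
          rw [hlogp x]; ring]
      rw [Finset.sum_add_distrib, ← Finset.sum_mul, hpsum, one_mul]
    have hge2 : 0 ≤ ∑ x, p x * (Real.log (p x) - Real.log (q x)) :=
      gibbs_nonneg p q hppos hqpos hpsum hqsum
    have hneg : ∑ x, p x * (Real.log (q x) - Real.log (p x))
        = -∑ x, p x * (Real.log (p x) - Real.log (q x)) := by
      rw [← Finset.sum_neg_distrib]
      exact Finset.sum_congr rfl fun x _ => by ring
    have hle : betheFreeEnergy T b1 b2 ψ2 hbsym hψsym + Real.log Z ≤ 0 := by
      rw [h2, hneg]; linarith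
    have hge : 0 ≤ betheFreeEnergy T b1 b2 ψ2 hbsym hψsym + Real.log Z := by
      rw [← hKL]; exact hKLge
    linarith
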